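/- Let 𝓛 : ℝⁿ × ℝⁿ → ℝ be a C² regular effective Lagrangian. Then a C² curve c : I → ℝⁿ satisfies the Euler–Lagrange equations d/dτ( ∂𝓛/∂yⁱ(c(τ), ċ(τ)) ) − ∂𝓛/∂xⁱ(c(τ), ċ(τ)) = 0 for all i = 1,…,n if and only if it satisfies the semispray (nonlinear geodesic) equations c̈ᵏ(τ) + 2 ᴸGᵏ(c(τ), ċ(τ)) = 0 for all k = 1,…,n. -/

import Mathlib

open scoped BigOperators

noncomputable section

/-- The phase space `ℝⁿ × ℝⁿ` with coordinates `(xⁱ, yᵃ)`. -/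
abbrev E (n : ℕ) := (Fin n → ℝ) × (Fin n → ℝ)

/-- Partial derivative `∂𝓛/∂yⁱ`. -/
def pdy {n : ℕ} (L : E n → ℝ) (i : Fin n) (u : E n) : ℝ :=
  fderiv ℝ (fun y => L (u.1, y)) u.2 (Pi.single i 1)

/-- Partial derivative `∂𝓛/∂xⁱ`. -/
def pdx {n : ℕ} (L : E n → ℝ) (i : Fin n) (u : E n) : ℝ :=
  fderiv ℝ (fun x => L (x, u.2)) u.1 (Pi.single i 1)

/-- The Lagrange metric `ᴸg_{ij}(x,y) = (1/2) ∂²𝓛/∂yⁱ∂yʲ`. -/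
def Lg {n : ℕ} (L : E n → ℝ) (u : E n) : Matrix (Fin n) (Fin n) ℝ :=
  Matrix.of fun i j => (1 / 2) * fderiv ℝ (fun y => pdy L i (u.1, y)) u.2 (Pi.single j 1)

/-- Regularity of an effective Lagrangian: the Hessian matrix is invertible everywhere. -/
def Regular {n : ℕ} (L : E n → ℝ) : Prop := ∀ u, IsUnit (Lg L u).det

/-- The canonical semispray coefficients
`ᴸGᵏ = (1/4) ᴸgᵏʲ ( yⁱ ∂²𝓛/∂yʲ∂xⁱ − ∂𝓛/∂xʲ )`. -/
def Gspray {n : ℕ} (L : E n → ℝ) (k : Fin n) (u : E n) : ℝ :=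
  (1 / 4) * ∑ j, (Lg L u)⁻¹ k j *
    ((fderiv ℝ (fun x => pdy L j (x, u.2)) u.1) u.2 - pdx L j u)

/- ### Auxiliary lemmas -/

lemma clm_pi_apply {n : ℕ} (φ : (Fin n → ℝ) →L[ℝ] ℝ) (w : Fin n → ℝ) :
    φ w = ∑ j, w j * φ (Pi.single j 1) := by
  have hw : w = ∑ j, w j • (Pi.single j 1 : Fin n → ℝ) := by
    funext k
    simp [Pi.single_apply, Finset.sum_apply]
  conv_lhs => rw [hw]
  rw [map_sum]
  simp [smul_eq_mul]

lemma fderiv_partial_fst {n : ℕ} {f : E n → ℝ} {u : E n} (hf : DifferentiableAt ℝ f u)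
    (v : Fin n → ℝ) :
    fderiv ℝ (fun x => f (x, u.2)) u.1 v = fderiv ℝ f u (v, 0) := by
  obtain ⟨x0, y0⟩ := u
  have h : HasFDerivAt (fun x => f (x, y0))
      ((fderiv ℝ f (x0, y0)).comp (ContinuousLinearMap.inl ℝ _ _)) x0 :=
    hf.hasFDerivAt.comp x0 (hasFDerivAt_prodMk_left x0 y0)
  rw [h.fderiv]
  simp

lemma fderiv_partial_snd {n : ℕ} {f : E n → ℝ} {u : E n} (hf : DifferentiableAt ℝ f u)
    (w : Fin n → ℝ) :
    fderiv ℝ (fun y => f (u.1, y)) u.2 w = fderiv ℝ f u (0, w) := by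
  obtain ⟨x0, y0⟩ := u
  have h : HasFDerivAt (fun y => f (x0, y))
      ((fderiv ℝ f (x0, y0)).comp (ContinuousLinearMap.inr ℝ _ _)) y0 :=
    hf.hasFDerivAt.comp y0 (hasFDerivAt_prodMk_right x0 y0)
  rw [h.fderiv]
  simp

lemma fderiv_split {n : ℕ} {f : E n → ℝ} {u : E n} (hf : DifferentiableAt ℝ f u)
    (v w : Fin n → ℝ) :
    fderiv ℝ f u (v, w) =
      fderiv ℝ (fun x => f (x, u.2)) u.1 v + fderiv ℝ (fun y => f (u.1, y)) u.2 w := by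
  rw [fderiv_partial_fst hf, fderiv_partial_snd hf]
  have h : ((v, w) : E n) = (v, 0) + (0, w) := by simp
  rw [h, map_add]

lemma pdy_eq {n : ℕ} {L : E n → ℝ} (hL : ContDiff ℝ 2 L) (i : Fin n) (u : E n) :
    pdy L i u = fderiv ℝ L u (0, Pi.single i 1) := by
  obtain ⟨x0, y0⟩ := u
  have hd : DifferentiableAt ℝ L (x0, y0) :=
    (hL.differentiable (by norm_num)).differentiableAt
  have h : HasFDerivAt (fun y => L (x0, y))
      ((fderiv ℝ L (x0, y0)).comp (ContinuousLinearMap.inr ℝ _ _)) y0 :=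
    hd.hasFDerivAt.comp y0 (hasFDerivAt_prodMk_right x0 y0)
  rw [pdy, h.fderiv]
  simp

lemma contDiff_pdy {n : ℕ} {L : E n → ℝ} (hL : ContDiff ℝ 2 L) (i : Fin n) :
    ContDiff ℝ 1 (pdy L i) := by
  have h : pdy L i = fun u => fderiv ℝ L u (0, Pi.single i 1) := funext (pdy_eq hL i)
  rw [h]
  exact (hL.fderiv_right (by norm_num)).clm_apply contDiff_const

lemma deriv_pdy_curve {n : ℕ} {L : E n → ℝ} (hL : ContDiff ℝ 2 L) {c : ℝ → Fin n → ℝ}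
    (hc : ContDiff ℝ 2 c) (τ : ℝ) (i : Fin n) :
    deriv (fun s => pdy L i (c s, deriv c s)) τ =
      fderiv ℝ (fun x => pdy L i (x, deriv c τ)) (c τ) (deriv c τ) +
      ∑ j, deriv (deriv c) τ j * (2 * Lg L (c τ, deriv c τ) i j) := by
  have hdc : ContDiff ℝ 1 (deriv c) := by
    have h : deriv c = fun t => fderiv ℝ c t 1 := funext fun t => rfl
    rw [h]
    exact (hc.fderiv_right (by norm_num)).clm_apply contDiff_const
  have h1 : HasDerivAt c (deriv c τ) τ :=
    ((hc.differentiable (by norm_num)).differentiableAt).hasDerivAt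
  have h2 : HasDerivAt (deriv c) (deriv (deriv c) τ) τ :=
    ((hdc.differentiable (by norm_num)).differentiableAt).hasDerivAt
  have hγ : HasDerivAt (fun s => ((c s, deriv c s) : E n))
      ((deriv c τ, deriv (deriv c) τ) : E n) τ := h1.prodMk h2
  have hp : DifferentiableAt ℝ (pdy L i) ((c τ, deriv c τ) : E n) :=
    ((contDiff_pdy hL i).differentiable (by norm_num)).differentiableAt
  have key : HasDerivAt (fun s => pdy L i (c s, deriv c s))
      (fderiv ℝ (pdy L i) ((c τ, deriv c τ) : E n) ((deriv c τ, deriv (deriv c) τ) : E n)) τ :=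
    by have := hp.hasFDerivAt.comp_hasDerivAt τ hγ; exact this
  rw [key.deriv, fderiv_split hp]
  congr 1
  rw [clm_pi_apply]
  refine Finset.sum_congr rfl fun j _ => ?_
  have hLg : Lg L ((c τ, deriv c τ) : E n) i j =
      (1 / 2) * fderiv ℝ (fun y => pdy L i (c τ, y)) (deriv c τ) (Pi.single j 1) := rfl
  rw [hLg]
  ring

lemma matrix_key {n : ℕ} (g : Matrix (Fin n) (Fin n) ℝ) (hg : IsUnit g.det)
    (d B : Fin n → ℝ) :
    (∀ i, 2 * g.mulVec d i + B i = 0) ↔ (∀ k, d k + (1 / 2) * g⁻¹.mulVec B k = 0) := by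
  constructor
  · intro h k
    have hB : B = (-2 : ℝ) • g.mulVec d := by
      funext i
      have := h i
      simp only [Pi.smul_apply, smul_eq_mul]
      linarith
    rw [hB, Matrix.mulVec_smul, Matrix.mulVec_mulVec, Matrix.nonsing_inv_mul g hg,
      Matrix.one_mulVec]
    simp only [Pi.smul_apply, smul_eq_mul]
    ring
  · intro h i
    have hd : d = (-(1 / 2) : ℝ) • g⁻¹.mulVec B := by
      funext k
      have := h k
      simp only [Pi.smul_apply, smul_eq_mul]
      linarith
    rw [hd, Matrix.mulVec_smul, Matrix.mulVec_mulVec, Matrix.mul_nonsing_inv g hg,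
      Matrix.one_mulVec]
    simp only [Pi.smul_apply, smul_eq_mul]
    ring

/-- A `C²` curve satisfies the Euler–Lagrange equations of a `C²` regular effective
Lagrangian iff it satisfies the semispray (nonlinear geodesic) equations
`c̈ᵏ + 2 ᴸGᵏ(c, ċ) = 0`. -/
theorem eulerLagrange_iff_semispray {n : ℕ} (L : E n → ℝ)
    (hL : ContDiff ℝ 2 L) (hreg : Regular L)
    (c : ℝ → Fin n → ℝ) (hc : ContDiff ℝ 2 c) :
    (∀ (τ : ℝ) (i : Fin n),
        deriv (fun s => pdy L i (c s, deriv c s)) τ - pdx L i (c τ, deriv c τ) = 0) ↔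
    (∀ (τ : ℝ) (k : Fin n),
        deriv (deriv c) τ k + 2 * Gspray L k (c τ, deriv c τ) = 0) := by
  have main : ∀ τ : ℝ,
      (∀ i, deriv (fun s => pdy L i (c s, deriv c s)) τ - pdx L i (c τ, deriv c τ) = 0) ↔
      (∀ k, deriv (deriv c) τ k + 2 * Gspray L k (c τ, deriv c τ) = 0) := by
    intro τ
    set u : E n := (c τ, deriv c τ) with hu
    set g : Matrix (Fin n) (Fin n) ℝ := Lg L u with hg
    set d : Fin n → ℝ := deriv (deriv c) τ with hd
    set B : Fin n → ℝ := fun j =>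
      (fderiv ℝ (fun x => pdy L j (x, u.2)) u.1) u.2 - pdx L j u with hB
    have hEL : ∀ i, deriv (fun s => pdy L i (c s, deriv c s)) τ - pdx L i u =
        2 * g.mulVec d i + B i := by
      intro i
      rw [deriv_pdy_curve hL hc τ i]
      have hsum : ∑ j, d j * (2 * g i j) = 2 * g.mulVec d i := by
        rw [Matrix.mulVec, dotProduct, Finset.mul_sum]
        exact Finset.sum_congr rfl fun j _ => by ring
      rw [hB]
      rw [show (fderiv ℝ (fun x => pdy L i (x, deriv c τ)) (c τ)) (deriv c τ) =
        (fderiv ℝ (fun x => pdy L i (x, u.2)) u.1) u.2 from rfl]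
      rw [show (Lg L ((c τ, deriv c τ) : E n)) = g from rfl]
      rw [show deriv (deriv c) τ = d from rfl]
      rw [hsum]
      ring
    have hG : ∀ k, 2 * Gspray L k u = (1 / 2) * g⁻¹.mulVec B k := by
      intro k
      have hsum : g⁻¹.mulVec B k = ∑ j, (Lg L u)⁻¹ k j *
          ((fderiv ℝ (fun x => pdy L j (x, u.2)) u.1) u.2 - pdx L j u) := rfl
      rw [Gspray, hsum, Finset.mul_sum, Finset.mul_sum, Finset.mul_sum]
      exact Finset.sum_congr rfl fun j _ => by ring
    constructor
    · intro h k
      have h' : ∀ i, 2 * g.mulVec d i + B i = 0 := fun i => by rw [← hEL i]; exact h i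
      have := (matrix_key g (hreg u) d B).mp h' k
      rw [hG k]
      exact this
    · intro h i
      have h' : ∀ k, d k + (1 / 2) * g⁻¹.mulVec B k = 0 := fun k => by
        rw [← hG k]; exact h k
      have := (matrix_key g (hreg u) d B).mpr h' i
      rw [hEL i]
      exact this
  constructor
  · intro h τ k
    exact (main τ).mp (h τ) k
  · intro h τ i
    exact (main τ).mpr (h τ) i
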